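/- Fix Ã ∈ ℝ^{m×n} and b̃ ∈ ℝᵐ. Then the constrained minimization of ‖E x_LS − ε‖ over all pairs (A, b) with b ∈ range(A) — where E = Ã − A, ε = b̃ − b, x_LS = A†b — has the same optimal value as the unconstrained least squares problem for the noisy system: min over consistent (A, b) of ‖E x_LS − ε‖ = min over all reparameterizations (V, x_b) with V ∈ ℝ^{n×r}, VᵀV = I_r, r ≤ n, x_b ∈ ℝⁿ of ‖Ã V Vᵀ x_b − b̃‖ = min_{x ∈ ℝⁿ} ‖Ã x − b̃‖. -/

import Mathlib

open Matrix

noncomputable section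

namespace RK

/-- The Euclidean inner product on `Fin n → ℝ`. -/
def dot {n : ℕ} (v w : Fin n → ℝ) : ℝ := ∑ i, v i * w i

/-- The squared Euclidean norm on `Fin n → ℝ`. -/
def normSq {n : ℕ} (v : Fin n → ℝ) : ℝ := ∑ i, v i ^ 2

/-- The Euclidean norm on `Fin n → ℝ`. -/
def euclNorm {n : ℕ} (v : Fin n → ℝ) : ℝ := Real.sqrt (normSq v)

/-- The squared Frobenius norm of a matrix. -/
def frobSq {m n : ℕ} (A : Matrix (Fin m) (Fin n) ℝ) : ℝ := ∑ i, ∑ j, A i j ^ 2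

/-- One step of the (randomized) Kaczmarz method for the system `A x ≈ b`, using row `i`:
`x ↦ x - ((aᵢᵀ x - bᵢ) / ‖aᵢ‖²) aᵢ`. -/
def rkStep {m n : ℕ} (A : Matrix (Fin m) (Fin n) ℝ) (b : Fin m → ℝ) (i : Fin m)
    (x : Fin n → ℝ) : Fin n → ℝ :=
  x - ((dot (A i) x - b i) / normSq (A i)) • A i

/-- `rkExp A b x0 k f` is the expectation `𝔼 f(x_k)` of `f` evaluated at the `k`-th iterate of the
randomized Kaczmarz algorithm applied to `A x ≈ b` started at `x0`, where at each step the row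
index `i` is drawn independently at random with probability `‖aᵢ‖² / ‖A‖_F²`. -/
def rkExp {m n : ℕ} (A : Matrix (Fin m) (Fin n) ℝ) (b : Fin m → ℝ) (x0 : Fin n → ℝ) :
    ℕ → ((Fin n → ℝ) → ℝ) → ℝ
  | 0, f => f x0
  | k + 1, f => rkExp A b x0 k fun x => ∑ i, normSq (A i) / frobSq A * f (rkStep A b i x)

/-- The four Penrose conditions: `B` is the Moore–Penrose pseudoinverse of `A`. -/
def IsMoorePenrose {m n : ℕ} (A : Matrix (Fin m) (Fin n) ℝ)
    (B : Matrix (Fin n) (Fin m) ℝ) : Prop :=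
  A * B * A = A ∧ B * A * B = B ∧ (A * B)ᵀ = A * B ∧ (B * A)ᵀ = B * A

/-- The row space `range(Aᵀ)` of a matrix `A`. -/
def rowSpace {m n : ℕ} (A : Matrix (Fin m) (Fin n) ℝ) : Set (Fin n → ℝ) :=
  {v | ∃ u : Fin m → ℝ, v = Aᵀ.mulVec u}

/-- The null space (kernel) of a matrix `A`. -/
def nullSpace {m n : ℕ} (A : Matrix (Fin m) (Fin n) ℝ) : Set (Fin n → ℝ) :=
  {v | A.mulVec v = 0}

/-- `σ` is the smallest nonzero singular value of `A`: `σ > 0`, `σ²` is an eigenvalue of `AᵀA`,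
and `σ²` is less than or equal to every nonzero eigenvalue of `AᵀA`. -/
def IsSmallestNonzeroSingularValue {m n : ℕ} (A : Matrix (Fin m) (Fin n) ℝ) (σ : ℝ) : Prop :=
  0 < σ ∧ (∃ v : Fin n → ℝ, v ≠ 0 ∧ (Aᵀ * A).mulVec v = σ ^ 2 • v) ∧
    ∀ μ : ℝ, μ ≠ 0 → (∃ v : Fin n → ℝ, v ≠ 0 ∧ (Aᵀ * A).mulVec v = μ • v) → σ ^ 2 ≤ μ

/-- **Equalities (4.6)–(4.8).** The constrained minimization of `‖E x_LS − ε‖` over consistent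
pairs `(A, b)` (with `E = Ã − A`, `ε = b̃ − b`, `x_LS = A†b`), its reparameterization over pairs
`(V, x_b)` with `V ∈ ℝ^{n×r}`, `VᵀV = I_r`, `r ≤ n`, and the unconstrained least squares problem
`min_x ‖Ã x − b̃‖` all have the same (attained) optimal value. -/
lemma euclNorm_eq_norm {m : ℕ} (v : Fin m → ℝ) :
    euclNorm v = ‖(WithLp.equiv 2 (Fin m → ℝ)).symm v‖ := by
  rw [EuclideanSpace.norm_eq, euclNorm, normSq]
  congr 1
  refine Finset.sum_congr rfl fun i _ => ?_
  rw [Real.norm_eq_abs, sq_abs]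
  rfl

lemma exists_min {m n : ℕ} (At : Matrix (Fin m) (Fin n) ℝ) (bt : Fin m → ℝ) :
    ∃ x0 : Fin n → ℝ, ∀ x : Fin n → ℝ,
      euclNorm (At.mulVec x0 - bt) ≤ euclNorm (At.mulVec x - bt) := by
  let L : (Fin n → ℝ) →ₗ[ℝ] EuclideanSpace ℝ (Fin m) :=
    (WithLp.linearEquiv 2 ℝ (Fin m → ℝ)).symm.toLinearMap ∘ₗ At.mulVecLin
  let K : Submodule ℝ (EuclideanSpace ℝ (Fin m)) := LinearMap.range L
  have : FiniteDimensional ℝ K := inferInstance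
  let bt' : EuclideanSpace ℝ (Fin m) := (WithLp.linearEquiv 2 ℝ (Fin m → ℝ)).symm bt
  obtain ⟨x0, hx0⟩ : ∃ x0, L x0 = (K.orthogonalProjectionOnto bt' : EuclideanSpace ℝ (Fin m)) :=
    (K.orthogonalProjectionOnto bt').2
  refine ⟨x0, fun x => ?_⟩
  have key : ‖bt' - L x0‖ ≤ ‖bt' - L x‖ := by
    rw [hx0, ← Submodule.starProjection_apply, Submodule.starProjection_minimal]
    exact ciInf_le ⟨0, fun r ⟨y, hy⟩ => hy ▸ norm_nonneg _⟩ (⟨L x, ⟨x, rfl⟩⟩ : K)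
  have h1 : ∀ z : Fin n → ℝ, euclNorm (At.mulVec z - bt) = ‖bt' - L z‖ := by
    intro z
    rw [euclNorm_eq_norm, ← norm_neg]
    congr 1
    have : bt' - L z = (WithLp.equiv 2 (Fin m → ℝ)).symm (bt - At.mulVec z) := by
      simp [bt', L, WithLp.linearEquiv]
    rw [this]
    simp [neg_sub]
  rw [h1, h1]; exact key

lemma key_rewrite {m n : ℕ} (At A : Matrix (Fin m) (Fin n) ℝ) (bt b : Fin m → ℝ)
    (y : Fin n → ℝ) (h : A.mulVec y = b) :
    (At - A).mulVec y - (bt - b) = At.mulVec y - bt := by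
  rw [sub_mulVec, h]
  abel

theorem reparameterization_equal_minima {m n : ℕ}
    (At : Matrix (Fin m) (Fin n) ℝ) (bt : Fin m → ℝ) :
    ∃ c : ℝ,
      IsLeast {c' : ℝ | ∃ (A : Matrix (Fin m) (Fin n) ℝ) (b : Fin m → ℝ)
          (Ap : Matrix (Fin n) (Fin m) ℝ), IsMoorePenrose A Ap ∧ (∃ x, A.mulVec x = b) ∧
          c' = euclNorm ((At - A).mulVec (Ap.mulVec b) - (bt - b))} c ∧
      IsLeast {c' : ℝ | ∃ r : ℕ, r ≤ n ∧ ∃ V : Matrix (Fin n) (Fin r) ℝ,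
          Vᵀ * V = 1 ∧ ∃ xb : Fin n → ℝ,
          c' = euclNorm (At.mulVec ((V * Vᵀ).mulVec xb) - bt)} c ∧
      IsLeast {c' : ℝ | ∃ x : Fin n → ℝ, c' = euclNorm (At.mulVec x - bt)} c := by
  obtain ⟨x0, hx0⟩ := exists_min At bt
  refine ⟨euclNorm (At.mulVec x0 - bt), ⟨?_, ?_⟩, ⟨?_, ?_⟩, ⟨x0, rfl⟩, ?_⟩
  · -- membership in set 1
    by_cases hx : x0 = 0
    · refine ⟨0, 0, 0, ?_, ⟨0, by simp⟩, ?_⟩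
      · refine ⟨by simp, by simp, by simp, by simp⟩
      · subst hx
        simp [key_rewrite At 0 bt 0 0 (by simp)]
    · -- rank one construction; need m > 0? handle m = 0 separately
      rcases Nat.eq_zero_or_pos m with hm | hm
      · subst hm
        refine ⟨0, 0, 0, ⟨by simp, by simp, by simp, by simp⟩, ⟨0, by simp⟩, ?_⟩
        have h0 : ∀ v : Fin 0 → ℝ, euclNorm v = 0 := by
          intro v; simp [euclNorm, normSq]
        rw [h0, h0]
      · set s : ℝ := normSq x0 with hs
        have hspos : 0 < s := by
          rcases Function.ne_iff.1 hx with ⟨j, hj⟩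
          have : (0:ℝ) < x0 j ^ 2 := pow_two_pos_of_ne_zero hj
          exact lt_of_lt_of_le this (Finset.single_le_sum
            (fun i _ => sq_nonneg (x0 i)) (Finset.mem_univ j))
        set i0 : Fin m := ⟨0, hm⟩
        set u : Fin m → ℝ := fun i => if i = i0 then 1 else 0 with hu
        set A : Matrix (Fin m) (Fin n) ℝ := Matrix.of fun i j => u i * x0 j with hA
        set Ap : Matrix (Fin n) (Fin m) ℝ := Matrix.of fun j i => s⁻¹ * (x0 j * u i) with hAp
        have hAAp : A * Ap = Matrix.of fun i k => u i * u k := by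
          ext i k
          simp only [Matrix.mul_apply, hA, hAp, Matrix.of_apply]
          have : ∀ j, u i * x0 j * (s⁻¹ * (x0 j * u k))
              = (s⁻¹ * (u i * u k)) * x0 j ^ 2 := by intro j; ring
          rw [Finset.sum_congr rfl fun j _ => this j, ← Finset.mul_sum]
          have h2 : (∑ j, x0 j ^ 2) = s := rfl
          rw [h2]
          field_simp
        have huu : ∑ k, u k * u k = 1 := by
          simp [hu, Finset.sum_ite_eq']
        refine ⟨A, A.mulVec x0, Ap, ⟨?_, ?_, ?_, ?_⟩, ⟨x0, rfl⟩, ?_⟩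
        · -- A * Ap * A = A
          rw [hAAp]
          ext i j
          simp only [Matrix.mul_apply, hA, Matrix.of_apply]
          have : ∀ k, u i * u k * (u k * x0 j) = (u i * x0 j) * (u k * u k) := by
            intro k; ring
          rw [Finset.sum_congr rfl fun k _ => this k, ← Finset.mul_sum, huu, mul_one]
        · -- Ap * A * Ap = Ap
          have hApA : Ap * A = Matrix.of fun j j' => s⁻¹ * (x0 j * x0 j') := by
            ext j j'
            simp only [Matrix.mul_apply, hAp, hA, Matrix.of_apply]
            have : ∀ i, s⁻¹ * (x0 j * u i) * (u i * x0 j')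
                = (s⁻¹ * (x0 j * x0 j')) * (u i * u i) := by intro i; ring
            rw [Finset.sum_congr rfl fun i _ => this i, ← Finset.mul_sum, huu, mul_one]
          rw [hApA]
          ext j i
          simp only [Matrix.mul_apply, hAp, Matrix.of_apply]
          have : ∀ j', s⁻¹ * (x0 j * x0 j') * (s⁻¹ * (x0 j' * u i))
              = (s⁻¹ * s⁻¹ * (x0 j * u i)) * x0 j' ^ 2 := by intro j'; ring
          rw [Finset.sum_congr rfl fun j' _ => this j', ← Finset.mul_sum]
          have h2 : (∑ j', x0 j' ^ 2) = s := rfl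
          rw [h2]
          field_simp
        · rw [hAAp]; ext i k; simp only [Matrix.transpose_apply, Matrix.of_apply]; ring
        · have hApA : Ap * A = Matrix.of fun j j' => s⁻¹ * (x0 j * x0 j') := by
            ext j j'
            simp only [Matrix.mul_apply, hAp, hA, Matrix.of_apply]
            have : ∀ i, s⁻¹ * (x0 j * u i) * (u i * x0 j')
                = (s⁻¹ * (x0 j * x0 j')) * (u i * u i) := by intro i; ring
            rw [Finset.sum_congr rfl fun i _ => this i, ← Finset.mul_sum, huu, mul_one]
          rw [hApA]; ext j j'; simp only [Matrix.transpose_apply, Matrix.of_apply]; ring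
        · -- value
          have hApb : Ap.mulVec (A.mulVec x0) = x0 := by
            funext j
            simp only [Matrix.mulVec, dotProduct, hAp, hA, Matrix.of_apply]
            have hsum : ∀ i, (∑ j', u i * x0 j' * x0 j') = u i * s := by
              intro i
              have h2 : u i * s = ∑ j', u i * x0 j' ^ 2 := by
                rw [← Finset.mul_sum]; rfl
              rw [h2]
              exact Finset.sum_congr rfl fun j' _ => by ring
            calc ∑ i, s⁻¹ * (x0 j * u i) * (∑ j', u i * x0 j' * x0 j')
                = ∑ i, (s⁻¹ * x0 j * s) * (u i * u i) := by
                  refine Finset.sum_congr rfl fun i _ => ?_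
                  rw [hsum i]; ring
              _ = x0 j := by
                  rw [← Finset.mul_sum, huu, mul_one]
                  field_simp
          rw [hApb, key_rewrite At A bt (A.mulVec x0) x0 rfl]
  · -- lower bound set 1
    rintro c' ⟨A, b, Ap, ⟨h1, _, _, _⟩, ⟨x, hx⟩, rfl⟩
    have hb : A.mulVec (Ap.mulVec b) = b := by
      conv_lhs => rw [← hx]
      rw [Matrix.mulVec_mulVec, Matrix.mulVec_mulVec, h1, hx]
    rw [key_rewrite At A bt b (Ap.mulVec b) hb]
    exact hx0 _
  · -- membership set 2
    refine ⟨n, le_refl n, 1, by simp, x0, ?_⟩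
    simp
  · -- lower bound set 2
    rintro c' ⟨r, hr, V, hV, xb, rfl⟩
    exact hx0 _
  · -- lower bound set 3
    rintro c' ⟨x, rfl⟩
    exact hx0 _

end RK
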